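/- For any γ ≥ 0 and the plactic congruence over {1 < 2 < 3}, the identity 1^γ (32)^γ ≡ (31)^γ 2^γ holds, i.e., the word consisting of γ ones followed by γ copies of 32 is Knuth-equivalent to γ copies of 31 followed by γ twos. -/

import Mathlib

/-- One-step Knuth (plactic) relation with contexts:
`bac ∼ bca` for `a < b ≤ c` and `acb ∼ cab` for `a ≤ b < c`. -/
inductive KnuthStep {A : Type*} [LinearOrder A] : List A → List A → Prop
  | k1 (u v : List A) (a b c : A) (h1 : a < b) (h2 : b ≤ c) :
      KnuthStep (u ++ [b, a, c] ++ v) (u ++ [b, c, a] ++ v)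
  | k2 (u v : List A) (a b c : A) (h1 : a ≤ b) (h2 : b < c) :
      KnuthStep (u ++ [a, c, b] ++ v) (u ++ [c, a, b] ++ v)

/-- The plactic congruence: equivalence closure of the Knuth steps
(which are already closed under contexts). -/
def Plactic {A : Type*} [LinearOrder A] : List A → List A → Prop :=
  Relation.EqvGen KnuthStep

lemma KnuthStep.appendLeft {A : Type*} [LinearOrder A] {x y : List A} (w : List A)
    (h : KnuthStep x y) : KnuthStep (w ++ x) (w ++ y) := by
  cases h with
  | k1 u v a b c h1 h2 =>
      simpa [List.append_assoc] using KnuthStep.k1 (w ++ u) v a b c h1 h2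
  | k2 u v a b c h1 h2 =>
      simpa [List.append_assoc] using KnuthStep.k2 (w ++ u) v a b c h1 h2

lemma KnuthStep.appendRight {A : Type*} [LinearOrder A] {x y : List A} (w : List A)
    (h : KnuthStep x y) : KnuthStep (x ++ w) (y ++ w) := by
  cases h with
  | k1 u v a b c h1 h2 =>
      simpa [List.append_assoc] using KnuthStep.k1 u (v ++ w) a b c h1 h2
  | k2 u v a b c h1 h2 =>
      simpa [List.append_assoc] using KnuthStep.k2 u (v ++ w) a b c h1 h2

lemma Plactic.appendLeft {A : Type*} [LinearOrder A] (w : List A) {x y : List A}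
    (h : Plactic x y) : Plactic (w ++ x) (w ++ y) := by
  induction h with
  | rel a b h => exact Relation.EqvGen.rel _ _ (h.appendLeft w)
  | refl a => exact Relation.EqvGen.refl _
  | symm a b _ ih => exact Relation.EqvGen.symm _ _ ih
  | trans a b c _ _ ih1 ih2 => exact Relation.EqvGen.trans _ _ _ ih1 ih2

lemma Plactic.appendRight {A : Type*} [LinearOrder A] (w : List A) {x y : List A}
    (h : Plactic x y) : Plactic (x ++ w) (y ++ w) := by
  induction h with
  | rel a b h => exact Relation.EqvGen.rel _ _ (h.appendRight w)
  | refl a => exact Relation.EqvGen.refl _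
  | symm a b _ ih => exact Relation.EqvGen.symm _ _ ih
  | trans a b c _ _ ih1 ih2 => exact Relation.EqvGen.trans _ _ _ ih1 ih2

lemma Plactic.of_step {A : Type*} [LinearOrder A] {x y : List A} (h : KnuthStep x y) :
    Plactic x y := Relation.EqvGen.rel _ _ h

lemma Plactic.trans' {A : Type*} [LinearOrder A] {x y z : List A}
    (h1 : Plactic x y) (h2 : Plactic y z) : Plactic x z :=
  Relation.EqvGen.trans _ _ _ h1 h2

/-- move a leading 0 past `(20)^γ`. -/
lemma lemA (γ : ℕ) :
    Plactic ((0 : Fin 3) :: (List.replicate γ ([2,0] : List (Fin 3))).flatten)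
      ((List.replicate γ ([2,0] : List (Fin 3))).flatten ++ [0]) := by
  induction γ with
  | zero => exact Relation.EqvGen.refl _
  | succ n ih =>
      have s1 : KnuthStep
          (((0 : Fin 3) :: [2,0]) ++ (List.replicate n ([2,0] : List (Fin 3))).flatten)
          (([2,0,0] : List (Fin 3)) ++ (List.replicate n ([2,0] : List (Fin 3))).flatten) := by
        simpa using KnuthStep.k2 ([] : List (Fin 3))
          (List.replicate n ([2,0] : List (Fin 3))).flatten 0 0 2 le_rfl (by decide)
      have s2 := (Plactic.appendLeft ([2,0] : List (Fin 3)) ih).appendRight ([] : List (Fin 3))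
      have : Plactic
          (([2,0] : List (Fin 3)) ++ ((0:Fin 3) :: (List.replicate n ([2,0] : List (Fin 3))).flatten))
          (([2,0] : List (Fin 3)) ++ ((List.replicate n ([2,0] : List (Fin 3))).flatten ++ [0])) :=
        Plactic.appendLeft _ ih
      refine Plactic.trans' (Plactic.of_step ?_) (by simpa [List.replicate_succ, List.append_assoc] using this)
      simpa [List.replicate_succ, List.append_assoc] using s1

/-- move a trailing 2 past `1^γ`. -/
lemma lemB (γ : ℕ) :
    Plactic (List.replicate γ (1 : Fin 3) ++ [2,1])
      ((2 : Fin 3) :: List.replicate (γ+1) (1 : Fin 3)) := by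
  induction γ with
  | zero => exact Relation.EqvGen.refl _
  | succ n ih =>
      have step : KnuthStep (([1,2,1] : List (Fin 3)) ++ List.replicate n (1 : Fin 3))
          (([2,1,1] : List (Fin 3)) ++ List.replicate n (1 : Fin 3)) := by
        simpa using KnuthStep.k2 ([] : List (Fin 3)) (List.replicate n (1 : Fin 3))
          1 1 2 le_rfl (by decide)
      have h1 : Plactic (List.replicate (n+1) (1 : Fin 3) ++ [2,1])
          (((1:Fin 3) :: (2:Fin 3) :: List.replicate (n+1) (1 : Fin 3))) := by
        simpa [List.replicate_succ, List.append_assoc] using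
          Plactic.appendLeft [(1 : Fin 3)] ih
      refine Plactic.trans' h1 ?_
      refine Plactic.of_step ?_
      simpa [List.replicate_succ, List.append_assoc] using step

theorem plactic_column_identity (γ : ℕ) :
    Plactic
      (List.replicate γ (0 : Fin 3) ++ (List.replicate γ [2, 1]).flatten)
      ((List.replicate γ [2, 0]).flatten ++ List.replicate γ (1 : Fin 3)) := by
  induction γ with
  | zero => exact Relation.EqvGen.refl _
  | succ n ih =>
      set K := (List.replicate n ([2,0] : List (Fin 3))).flatten with hK
      set J := (List.replicate n ([2,1] : List (Fin 3))).flatten with hJ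
      -- step 1: use IH inside context [0] ++ _ ++ [2,1]
      have h1 : Plactic
          ((0:Fin 3) :: ((List.replicate n (0 : Fin 3) ++ J) ++ [2,1]))
          ((0:Fin 3) :: ((K ++ List.replicate n (1 : Fin 3)) ++ [2,1])) := by
        exact Plactic.appendLeft [(0:Fin 3)] (Plactic.appendRight _ ih)
      -- step 2: lemB inside context [0] ++ K ++ _
      have h2 : Plactic
          ((0:Fin 3) :: (K ++ (List.replicate n (1 : Fin 3) ++ [2,1])))
          ((0:Fin 3) :: (K ++ ((2:Fin 3) :: List.replicate (n+1) (1 : Fin 3)))) :=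
        Plactic.appendLeft ((0:Fin 3) :: K) (lemB n)
      -- step 3: lemA inside context _ ++ [2] ++ 1^(n+1)
      have h3 : Plactic
          (((0:Fin 3) :: K) ++ ((2:Fin 3) :: List.replicate (n+1) (1 : Fin 3)))
          ((K ++ [0]) ++ ((2:Fin 3) :: List.replicate (n+1) (1 : Fin 3))) :=
        Plactic.appendRight _ (lemA n)
      -- step 4: final Knuth step: K ++ [0,2,1] ++ 1^n ≡ K ++ [2,0,1] ++ 1^n
      have h4 : KnuthStep (K ++ [0,2,1] ++ List.replicate n (1 : Fin 3))
          (K ++ [2,0,1] ++ List.replicate n (1 : Fin 3)) :=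
        KnuthStep.k2 K (List.replicate n (1 : Fin 3)) 0 1 2 (by decide) (by decide)
      have goalL : List.replicate (n+1) (0 : Fin 3) ++ (List.replicate (n+1) ([2,1] : List (Fin 3))).flatten
          = (0:Fin 3) :: ((List.replicate n (0 : Fin 3) ++ J) ++ [2,1]) := by
        rw [List.replicate_succ, List.replicate_succ']
        simp [hJ, List.append_assoc]
      have goalR : (List.replicate (n+1) ([2,0] : List (Fin 3))).flatten ++ List.replicate (n+1) (1 : Fin 3)
          = K ++ [2,0,1] ++ List.replicate n (1 : Fin 3) := by
        rw [List.replicate_succ', List.replicate_succ]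
        simp [hK, List.append_assoc]
      rw [goalL, goalR]
      have h2' : Plactic ((0:Fin 3) :: (K ++ List.replicate n (1 : Fin 3) ++ [2,1]))
          (((0:Fin 3) :: K) ++ ((2:Fin 3) :: List.replicate (n+1) (1 : Fin 3))) := by
        simpa [List.append_assoc] using h2
      have h4' : Plactic ((K ++ [0]) ++ ((2:Fin 3) :: List.replicate (n+1) (1 : Fin 3)))
          (K ++ [2,0,1] ++ List.replicate n (1 : Fin 3)) := by
        simpa [List.replicate_succ, List.append_assoc] using Plactic.of_step h4
      exact h1.trans' (h2'.trans' (h3.trans' h4'))
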